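/- Let 0 < σ < 1, 3 < α ≤ 4, and let f : (0,1] × [0,∞) → [0,∞) be continuous with (t,y) ↦ t^σ f(t,y) extending continuously to [0,1] × [0,∞). Let N = max_{t∈[0,1]} ∫₀¹ G(t,s) s^(−σ) ds, and suppose there exist 0 < λ ≤ 1/N and τ > 0 such that t^σ |f(t,x) − f(t,y)| ≤ λ|x−y|/(1 + τ√|x−y|)² for all x, y ≥ 0 and t ∈ [0,1]. Then the operator T defined on P = {u ∈ C[0,1] : u ≥ 0} by (Tu)(t) = ∫₀¹ G(t,s) f(s,u(s)) ds maps P into P and has a unique fixed point u ∈ P; i.e., the integral equation u(t) = ∫₀¹ G(t,s) f(s,u(s)) ds has a unique nonnegative continuous solution on [0,1]. -/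

import Mathlib

open Real Set MeasureTheory intervalIntegral


noncomputable def greenG (α t s : ℝ) : ℝ :=
  if s ≤ t then
    ((t - s) ^ (α - 1) + (1 - s) ^ (α - 2) * t ^ (α - 2) * ((s - t) + (α - 2) * (1 - t) * s)) / Real.Gamma α
  else
    (1 - s) ^ (α - 2) * t ^ (α - 2) * ((s - t) + (α - 2) * (1 - t) * s) / Real.Gamma α

noncomputable def uext (u : C(Set.Icc (0:ℝ) 1, ℝ)) (s : ℝ) : ℝ :=
  if h : s ∈ Set.Icc (0:ℝ) 1 then u ⟨s, h⟩ else 0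

noncomputable def psi (τ r : ℝ) : ℝ := r / (1 + τ * Real.sqrt r) ^ 2

lemma greenG_eq (α t s : ℝ) (hα : 3 < α) :
    greenG α t s = (max (t - s) 0) ^ (α - 1) / Real.Gamma α
      + (1 - s) ^ (α - 2) * t ^ (α - 2) * ((s - t) + (α - 2) * (1 - t) * s) / Real.Gamma α := by
  unfold greenG
  by_cases h : s ≤ t
  · rw [if_pos h, max_eq_left (by linarith)]
    ring
  · rw [if_neg h, max_eq_right (by push_neg at h; linarith),
      Real.zero_rpow (by linarith)]
    ring

lemma greenG_continuous (α : ℝ) (hα : 3 < α) :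
    Continuous (fun p : ℝ × ℝ => greenG α p.1 p.2) := by
  have h1 : Continuous (fun p : ℝ × ℝ => (max (p.1 - p.2) 0) ^ (α - 1)) :=
    Continuous.rpow_const (by continuity) (fun x => Or.inr (by linarith))
  have h2 : Continuous (fun p : ℝ × ℝ => (1 - p.2) ^ (α - 2)) :=
    Continuous.rpow_const (by continuity) (fun x => Or.inr (by linarith))
  have h3 : Continuous (fun p : ℝ × ℝ => (p.1) ^ (α - 2)) :=
    Continuous.rpow_const (by continuity) (fun x => Or.inr (by linarith))
  have : Continuous (fun p : ℝ × ℝ =>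
      (max (p.1 - p.2) 0) ^ (α - 1) / Real.Gamma α
      + (1 - p.2) ^ (α - 2) * p.1 ^ (α - 2) * ((p.2 - p.1) + (α - 2) * (1 - p.1) * p.2) / Real.Gamma α) := by
    apply Continuous.add
    · exact h1.div_const _
    · exact ((h2.mul h3).mul (by continuity)).div_const _
  convert this using 2 with p
  exact greenG_eq α p.1 p.2 hα

-- y^β - x^β ≤ β y^(β-1) (y - x)
lemma rpow_sub_rpow_le (x y β : ℝ) (hx : 0 ≤ x) (hxy : x ≤ y) (hβ : 1 ≤ β) :
    y ^ β - x ^ β ≤ β * y ^ (β - 1) * (y - x) := by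
  rcases eq_or_lt_of_le (hx.trans hxy) with hy | hy
  · have : x = 0 := le_antisymm (hxy.trans hy.symm.le) hx
    subst this
    simp [← hy, Real.zero_rpow (show β ≠ 0 by linarith)]
  · set u : ℝ := (y - x) / y with hu
    have hu0 : 0 ≤ u := div_nonneg (by linarith) hy.le
    have hu1 : u ≤ 1 := by
      rw [div_le_one hy]; linarith
    have hxu : x = y * (1 - u) := by
      rw [hu, mul_sub, mul_one, mul_div_assoc', mul_div_cancel_left₀ _ hy.ne']; ring
    have hber : 1 - β * u ≤ (1 - u) ^ β := by
      have := one_add_mul_self_le_rpow_one_add (s := -u) (by linarith) hβ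
      simpa [sub_eq_add_neg, mul_neg] using this
    have hxb : x ^ β = y ^ β * (1 - u) ^ β := by
      rw [hxu, Real.mul_rpow hy.le (by linarith)]
    have hyb : 0 ≤ y ^ β := Real.rpow_nonneg hy.le β
    have h1 : y ^ β * (1 - β * u) ≤ x ^ β := by
      rw [hxb]; exact mul_le_mul_of_nonneg_left hber hyb
    have h2 : y ^ β - x ^ β ≤ y ^ β * (β * u) := by nlinarith
    calc y ^ β - x ^ β ≤ y ^ β * (β * u) := h2
      _ = β * (y ^ β / y) * (y - x) := by rw [hu]; simp only [div_eq_mul_inv]; ring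
      _ = β * y ^ (β - 1) * (y - x) := by
          rw [← Real.rpow_sub_one hy.ne']

lemma gamma_pos (α : ℝ) (hα : 3 < α) : 0 < Real.Gamma α :=
  Real.Gamma_pos_of_pos (by linarith)

lemma greenG_nonneg (α t s : ℝ) (hα : 3 < α) (ht0 : 0 ≤ t) (ht1 : t ≤ 1)
    (hs0 : 0 ≤ s) (hs1 : s ≤ 1) : 0 ≤ greenG α t s := by
  unfold greenG
  have hΓ := gamma_pos α hα
  by_cases h : s ≤ t
  · rw [if_pos h]
    apply div_nonneg _ hΓ.le
    set β : ℝ := α - 2 with hβdef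
    have hβ : 1 ≤ β := by simp [hβdef]; linarith
    set x : ℝ := t - s with hxdef
    set y : ℝ := t * (1 - s) with hydef
    have hx0 : 0 ≤ x := by simp [hxdef]; linarith
    have hxy : x ≤ y := by nlinarith
    have hy0 : 0 ≤ y := hx0.trans hxy
    have hB : (1 - s) ^ β * t ^ β = y ^ β := by
      rw [hydef, Real.mul_rpow ht0 (by linarith), mul_comm]
    have key : x * y ^ β - x * x ^ β ≤ β * (y - x) * y ^ β := by
      rcases eq_or_lt_of_le hy0 with hy | hy
      · have hx : x = 0 := le_antisymm (hxy.trans hy.symm.le) hx0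
        simp [hx, ← hy, Real.zero_rpow (show β ≠ 0 by linarith)]
      · have h1 : y ^ β - x ^ β ≤ β * y ^ (β - 1) * (y - x) :=
          rpow_sub_rpow_le x y β hx0 hxy hβ
        have h2 : x * (y ^ β - x ^ β) ≤ x * (β * y ^ (β - 1) * (y - x)) := by
          apply mul_le_mul_of_nonneg_left h1 hx0
        have h3 : x * (β * y ^ (β - 1) * (y - x)) ≤ y * (β * y ^ (β - 1) * (y - x)) := by
          apply mul_le_mul_of_nonneg_right hxy
          have h5 := Real.rpow_nonneg hy0 (β - 1)
          have h6 : (0:ℝ) ≤ y - x := by linarith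
          have h7 : (0:ℝ) < β := by linarith
          positivity
        have h4 : y * y ^ (β - 1) = y ^ β := by
          nth_rewrite 2 [show β = (β - 1) + 1 by ring]
          rw [Real.rpow_add_one hy.ne']
          ring
      -- combine
        calc x * y ^ β - x * x ^ β = x * (y ^ β - x ^ β) := by ring
          _ ≤ x * (β * y ^ (β - 1) * (y - x)) := h2
          _ ≤ y * (β * y ^ (β - 1) * (y - x)) := h3
          _ = β * (y - x) * (y * y ^ (β - 1)) := by ring
          _ = β * (y - x) * y ^ β := by rw [h4]
    have hxpow : x ^ (α - 1) = x * x ^ β := by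
      rcases eq_or_lt_of_le hx0 with hx | hx
      · rw [← hx, Real.zero_rpow (by linarith), Real.zero_rpow (show β ≠ 0 by linarith), mul_zero]
      · rw [show α - 1 = β + 1 by simp [hβdef]; ring, Real.rpow_add_one hx.ne']
        ring
    have hyx : y - x = s * (1 - t) := by simp [hxdef, hydef]; ring
    have goal' : 0 ≤ x ^ (α - 1) + y ^ β * ((s - t) + β * (1 - t) * s) := by
      rw [hxpow]
      have : (s - t) + β * (1 - t) * s = -x + β * (y - x) := by
        rw [hyx]; simp [hxdef]; ring
      rw [this]
      nlinarith [key]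
    calc (0:ℝ) ≤ x ^ (α - 1) + y ^ β * ((s - t) + β * (1 - t) * s) := goal'
      _ = (t - s) ^ (α - 1) + (1 - s) ^ (α - 2) * t ^ (α - 2) * ((s - t) + (α - 2) * (1 - t) * s) := by
          rw [← hB]
  · rw [if_neg h]
    push_neg at h
    apply div_nonneg _ hΓ.le
    have h1 : 0 ≤ (1 - s) ^ (α - 2) := Real.rpow_nonneg (by linarith) _
    have h2 : 0 ≤ t ^ (α - 2) := Real.rpow_nonneg ht0 _
    have h3 : 0 ≤ (s - t) + (α - 2) * (1 - t) * s := by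
      have := mul_nonneg (mul_nonneg (show (0:ℝ) ≤ α - 2 by linarith) (show (0:ℝ) ≤ 1 - t by linarith)) hs0
      linarith
    positivity

lemma greenG_zero (α t : ℝ) (hα : 3 < α) (ht0 : 0 ≤ t) : greenG α t 0 = 0 := by
  unfold greenG
  rw [if_pos ht0]
  have : t ^ (α - 1) = t ^ (α - 2) * t := by
    rcases eq_or_lt_of_le ht0 with ht | ht
    · rw [← ht, Real.zero_rpow (by linarith), Real.zero_rpow (by linarith), zero_mul]
    · rw [← Real.rpow_add_one ht.ne']
      congr 1; ring
  rw [sub_zero, sub_zero]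
  rw [show (0:ℝ) - t = -t by ring]
  rw [Real.one_rpow]
  field_simp
  rw [this]; ring

section psi
variable {τ : ℝ} (hτ : 0 < τ)

include hτ in
lemma psi_nonneg {r : ℝ} (hr : 0 ≤ r) : 0 ≤ psi τ r := by
  unfold psi
  have h1 : 0 < 1 + τ * Real.sqrt r := by positivity
  positivity

include hτ in
lemma one_add_pos {r : ℝ} (hr : 0 ≤ r) : 0 < 1 + τ * Real.sqrt r := by positivity

include hτ in
lemma psi_le_self {r : ℝ} (hr : 0 ≤ r) : psi τ r ≤ r := by
  unfold psi
  rw [div_le_iff₀ (by positivity)]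
  have h : 1 ≤ (1 + τ * Real.sqrt r) ^ 2 := by nlinarith [sq_nonneg (τ * Real.sqrt r), mul_nonneg hτ.le (Real.sqrt_nonneg r)]
  nlinarith [mul_le_mul_of_nonneg_left h hr]

include hτ in
lemma psi_eq_sq {r : ℝ} (hr : 0 ≤ r) :
    psi τ r = (Real.sqrt r / (1 + τ * Real.sqrt r)) ^ 2 := by
  unfold psi
  rw [div_pow, Real.sq_sqrt hr]

include hτ in
lemma psi_mono {a b : ℝ} (ha : 0 ≤ a) (hab : a ≤ b) : psi τ a ≤ psi τ b := by
  have hb : 0 ≤ b := ha.trans hab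
  rw [psi_eq_sq hτ ha, psi_eq_sq hτ hb]
  have hsab : Real.sqrt a ≤ Real.sqrt b := Real.sqrt_le_sqrt hab
  have hsa : 0 ≤ Real.sqrt a := Real.sqrt_nonneg a
  have hsb : 0 ≤ Real.sqrt b := Real.sqrt_nonneg b
  have hq : Real.sqrt a / (1 + τ * Real.sqrt a) ≤ Real.sqrt b / (1 + τ * Real.sqrt b) := by
    rw [div_le_div_iff₀ (by positivity) (by positivity)]
    nlinarith
  have hqa : 0 ≤ Real.sqrt a / (1 + τ * Real.sqrt a) := by positivity
  exact pow_le_pow_left₀ hqa hq 2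

include hτ in
lemma psi_sqrt {r : ℝ} (hr : 0 ≤ r) :
    Real.sqrt (psi τ r) = Real.sqrt r / (1 + τ * Real.sqrt r) := by
  rw [psi_eq_sq hτ hr, Real.sqrt_sq (by positivity)]

include hτ in
lemma psi_lt_self {r : ℝ} (hr : 0 < r) : psi τ r < r := by
  unfold psi
  rw [div_lt_iff₀ (by positivity)]
  have hs : 0 < Real.sqrt r := Real.sqrt_pos.mpr hr
  have h : 1 < (1 + τ * Real.sqrt r) ^ 2 := by nlinarith [sq_nonneg (τ * Real.sqrt r), mul_pos hτ hs]
  nlinarith [mul_lt_mul_of_pos_left h hr]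

-- iteration decay:  e (n+1) ≤ e n / (1 + τ e n), e n ≥ 0  ⇒  e n ≤ e 0 / (1 + n τ e 0)
include hτ in
lemma iter_decay (e : ℕ → ℝ) (hnn : ∀ n, 0 ≤ e n)
    (hstep : ∀ n, e (n + 1) ≤ e n / (1 + τ * e n)) (n : ℕ) :
    e n ≤ e 0 / (1 + n * τ * e 0) := by
  induction n with
  | zero => simp
  | succ n ih =>
    have h0 : 0 ≤ e 0 := hnn 0
    have hd : (0:ℝ) < 1 + n * τ * e 0 := by positivity
    have hq : e n / (1 + τ * e n) ≤ (e 0 / (1 + n * τ * e 0)) / (1 + τ * (e 0 / (1 + n * τ * e 0))) := by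
      have hmono : ∀ x y : ℝ, 0 ≤ x → x ≤ y → x / (1 + τ * x) ≤ y / (1 + τ * y) := by
        intro x y hx hxy
        rw [div_le_div_iff₀ (by positivity) (by nlinarith)]
        nlinarith
      exact hmono _ _ (hnn n) ih
    have heq : (e 0 / (1 + n * τ * e 0)) / (1 + τ * (e 0 / (1 + n * τ * e 0)))
        = e 0 / (1 + (n + 1) * τ * e 0) := by
      rw [div_div]
      congr 1
      field_simp
      ring
    calc e (n + 1) ≤ e n / (1 + τ * e n) := hstep n
      _ ≤ _ := hq
      _ = e 0 / (1 + (n + 1) * τ * e 0) := heq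
      _ = e 0 / (1 + (↑(n + 1)) * τ * e 0) := by push_cast; ring_nf
end psi

section main
variable {σ α : ℝ} (hσ0 : 0 < σ) (hσ1 : σ < 1) (hα : 3 < α)

include hσ1 in
lemma weight_integrable (c : ℝ) : IntervalIntegrable (fun s : ℝ => c * s ^ (-σ)) volume 0 1 :=
  (intervalIntegral.intervalIntegrable_rpow' (by linarith)).const_mul c

lemma huIoc : Set.uIoc (0:ℝ) 1 = Ioc 0 1 := uIoc_of_le (by norm_num)

include hσ1 in
lemma weight_integral : ∫ s in (0:ℝ)..1, s ^ (-σ) = 1 / (1 - σ) := by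
  rw [integral_rpow (Or.inl (by linarith))]
  rw [Real.one_rpow, Real.zero_rpow (by linarith)]
  rw [show -σ + 1 = 1 - σ by ring]
  norm_num

include hσ1 in
lemma prod_integrable {k g : ℝ → ℝ} {K c : ℝ} (hk : Continuous k)
    (hK : ∀ s ∈ Ioc (0:ℝ) 1, |k s| ≤ K)
    (hg : AEStronglyMeasurable g (volume.restrict (Ioc (0:ℝ) 1)))
    (hb : ∀ s ∈ Ioc (0:ℝ) 1, |g s| ≤ c * s ^ (-σ)) :
    IntervalIntegrable (fun s => k s * g s) volume 0 1 := by
  apply IntervalIntegrable.mono_fun (weight_integrable hσ1 (K * c))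
  · rw [huIoc]; exact (hk.aestronglyMeasurable.restrict).mul hg
  · rw [huIoc]
    filter_upwards [MeasureTheory.ae_restrict_mem measurableSet_Ioc] with s hs
    have h1 := hK s hs
    have h2 := hb s hs
    have hsp : 0 < s ^ (-σ) := Real.rpow_pos_of_pos hs.1 _
    have hgn : 0 ≤ |g s| := abs_nonneg _
    have hkn : 0 ≤ |k s| := abs_nonneg _
    have hcn : 0 ≤ c * s ^ (-σ) := le_trans hgn h2
    simp only [norm_mul, Real.norm_eq_abs]
    calc |k s| * |g s| ≤ K * (c * s ^ (-σ)) := by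
          apply mul_le_mul h1 h2 hgn (le_trans hkn h1)
      _ = |K * c * s ^ (-σ)| := by
          rw [abs_of_nonneg (by rw [mul_assoc]; exact mul_nonneg (hkn.trans h1) hcn), mul_assoc]
      _ = |K| * |c| * |s ^ (-σ)| := by rw [abs_mul, abs_mul]

include hα in
lemma greenG_bound : ∃ K : ℝ, 0 ≤ K ∧ ∀ t ∈ Icc (0:ℝ) 1, ∀ s ∈ Icc (0:ℝ) 1, |greenG α t s| ≤ K := by
  obtain ⟨C, hC⟩ := (isCompact_Icc.prod isCompact_Icc).exists_bound_of_continuousOn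
    (greenG_continuous α hα).continuousOn
  refine ⟨max C 0, le_max_right _ _, fun t ht s hs => ?_⟩
  exact le_trans (hC (t, s) ⟨ht, hs⟩) (le_max_left _ _)

-- the weight measurability
lemma weight_aesm : AEStronglyMeasurable (fun s : ℝ => s ^ (-σ)) (volume.restrict (Ioc (0:ℝ) 1)) := by
  apply ContinuousOn.aestronglyMeasurable _ measurableSet_Ioc
  exact fun x hx => (Real.continuousAt_rpow_const x (-σ) (Or.inl (ne_of_gt hx.1))).continuousWithinAt

include hσ1 hα in
lemma greenG_weight_integrable (t : ℝ) (ht : t ∈ Icc (0:ℝ) 1) :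
    IntervalIntegrable (fun s => greenG α t s * s ^ (-σ)) volume 0 1 := by
  obtain ⟨K, hK0, hK⟩ := greenG_bound hα
  have hk : Continuous (fun s : ℝ => greenG α t s) :=
    (greenG_continuous α hα).comp (continuous_const.prodMk continuous_id)
  apply prod_integrable hσ1 hk
    (fun s hs => hK t ht s ⟨hs.1.le, hs.2⟩) (weight_aesm)
  intro s hs
  rw [abs_of_nonneg (Real.rpow_nonneg hs.1.le _), one_mul]

include hσ1 hα in
lemma greenG_prod_integrable (t : ℝ) (ht : t ∈ Icc (0:ℝ) 1) {g : ℝ → ℝ} {c : ℝ}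
    (hg : AEStronglyMeasurable g (volume.restrict (Ioc (0:ℝ) 1)))
    (hb : ∀ s ∈ Ioc (0:ℝ) 1, |g s| ≤ c * s ^ (-σ)) :
    IntervalIntegrable (fun s => greenG α t s * g s) volume 0 1 := by
  obtain ⟨K, hK0, hK⟩ := greenG_bound hα
  have hk : Continuous (fun s : ℝ => greenG α t s) :=
    (greenG_continuous α hα).comp (continuous_const.prodMk continuous_id)
  exact prod_integrable hσ1 hk (fun s hs => hK t ht s ⟨hs.1.le, hs.2⟩) hg hb

-- nonnegativity
include hσ0 hα in
lemma greenG_integral_nonneg (t : ℝ) (ht : t ∈ Icc (0:ℝ) 1) {g : ℝ → ℝ}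
    (hg : ∀ s ∈ Ioc (0:ℝ) 1, 0 ≤ g s) :
    0 ≤ ∫ s in (0:ℝ)..1, greenG α t s * g s := by
  apply intervalIntegral.integral_nonneg (by norm_num)
  intro s hs
  rcases eq_or_lt_of_le hs.1 with h0 | h0
  · rw [← h0, greenG_zero α t hα ht.1, zero_mul]
  · exact mul_nonneg (greenG_nonneg α t s hα ht.1 ht.2 h0.le hs.2) (hg s ⟨h0, hs.2⟩)

-- bound: |∫ G g| ≤ c * ∫ G s^{-σ}
include hσ0 hσ1 hα in
lemma greenG_integral_bound (t : ℝ) (ht : t ∈ Icc (0:ℝ) 1) {g : ℝ → ℝ} {c : ℝ} (hc : 0 ≤ c)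
    (hg : AEStronglyMeasurable g (volume.restrict (Ioc (0:ℝ) 1)))
    (hb : ∀ s ∈ Ioc (0:ℝ) 1, |g s| ≤ c * s ^ (-σ)) :
    |∫ s in (0:ℝ)..1, greenG α t s * g s| ≤ c * ∫ s in (0:ℝ)..1, greenG α t s * s ^ (-σ) := by
  have hint1 := greenG_prod_integrable hσ1 hα t ht hg hb
  have hint2 := greenG_weight_integrable hσ1 hα t ht
  have hpt : ∀ s ∈ Icc (0:ℝ) 1, greenG α t s * g s ≤ c * (greenG α t s * s ^ (-σ)) ∧
      -(c * (greenG α t s * s ^ (-σ))) ≤ greenG α t s * g s := by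
    intro s hs
    rcases eq_or_lt_of_le hs.1 with h0 | h0
    · rw [← h0, greenG_zero α t hα ht.1]
      norm_num
    · have hG := greenG_nonneg α t s hα ht.1 ht.2 h0.le hs.2
      have hbs := hb s ⟨h0, hs.2⟩
      constructor
      · calc greenG α t s * g s ≤ greenG α t s * (c * s ^ (-σ)) := by
              apply mul_le_mul_of_nonneg_left (le_trans (le_abs_self _) hbs) hG
          _ = c * (greenG α t s * s ^ (-σ)) := by ring
      · have : -(c * s ^ (-σ)) ≤ g s := by
          have := neg_abs_le (g s); linarith
        calc -(c * (greenG α t s * s ^ (-σ))) = greenG α t s * (-(c * s ^ (-σ))) := by ring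
          _ ≤ greenG α t s * g s := mul_le_mul_of_nonneg_left this hG
  rw [abs_le]
  constructor
  · have := intervalIntegral.integral_mono_on (by norm_num : (0:ℝ) ≤ 1)
      (hint2.const_mul c).neg hint1 (fun s hs => (hpt s hs).2)
    simp only [Pi.neg_apply] at this
    rw [intervalIntegral.integral_neg, intervalIntegral.integral_const_mul] at this
    linarith
  · have := intervalIntegral.integral_mono_on (by norm_num : (0:ℝ) ≤ 1)
      hint1 (hint2.const_mul c) (fun s hs => (hpt s hs).1)
    rw [intervalIntegral.integral_const_mul] at this
    linarith

include hσ0 hσ1 hα in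
lemma greenG_integral_continuous {g : ℝ → ℝ} {c : ℝ} (hc : 0 ≤ c)
    (hg : AEStronglyMeasurable g (volume.restrict (Ioc (0:ℝ) 1)))
    (hb : ∀ s ∈ Ioc (0:ℝ) 1, |g s| ≤ c * s ^ (-σ)) :
    ContinuousOn (fun t => ∫ s in (0:ℝ)..1, greenG α t s * g s) (Icc 0 1) := by
  have hUC := (isCompact_Icc.prod isCompact_Icc).uniformContinuousOn_of_continuous
    (α := ℝ × ℝ) (s := Icc (0:ℝ) 1 ×ˢ Icc (0:ℝ) 1)
    (greenG_continuous α hα).continuousOn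
  rw [Metric.uniformContinuousOn_iff] at hUC
  rw [Metric.continuousOn_iff]
  intro t ht ε hε
  set ε' : ℝ := ε * (1 - σ) / (2 * (c + 1)) with hε'def
  have hε' : 0 < ε' := by
    apply div_pos (by nlinarith) (by linarith)
  obtain ⟨δ, hδ0, hδ⟩ := hUC ε' hε'
  refine ⟨δ, hδ0, fun t' ht' htt' => ?_⟩
  have hint := greenG_prod_integrable hσ1 hα t ht hg hb
  have hint' := greenG_prod_integrable hσ1 hα t' ht' hg hb
  rw [Real.dist_eq, ← intervalIntegral.integral_sub hint' hint]
  have hkey : ∀ s ∈ Ioc (0:ℝ) 1, ‖greenG α t' s * g s - greenG α t s * g s‖ ≤ ε' * c * s ^ (-σ) := by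
    intro s hs
    have hsI : s ∈ Icc (0:ℝ) 1 := ⟨hs.1.le, hs.2⟩
    have hd : dist ((t', s) : ℝ × ℝ) ((t, s) : ℝ × ℝ) < δ := by
      rw [Prod.dist_eq]
      simp only [dist_self]
      rw [Real.dist_eq] at htt' ⊢
      rw [max_eq_left (abs_nonneg _)]
      exact htt'
    have hGd := hδ (t', s) ⟨ht', hsI⟩ (t, s) ⟨ht, hsI⟩ hd
    rw [Real.dist_eq] at hGd
    have hgb := hb s hs
    calc ‖greenG α t' s * g s - greenG α t s * g s‖
        = |greenG α t' s - greenG α t s| * |g s| := by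
          rw [Real.norm_eq_abs, ← abs_mul]; ring_nf
      _ ≤ ε' * (c * s ^ (-σ)) := by
          apply mul_le_mul hGd.le hgb (abs_nonneg _) hε'.le
      _ = ε' * c * s ^ (-σ) := by ring
  have hnorm := intervalIntegral.norm_integral_le_abs_of_norm_le
    (f := fun s => greenG α t' s * g s - greenG α t s * g s)
    (g := fun s => ε' * c * s ^ (-σ)) (μ := volume) (a := 0) (b := 1)
    ?_ ((weight_integrable hσ1 (ε' * c)))
  · rw [Real.norm_eq_abs] at hnorm
    apply lt_of_le_of_lt hnorm
    rw [intervalIntegral.integral_const_mul, weight_integral hσ1]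
    have h1σ : (0:ℝ) < 1 - σ := by linarith
    rw [abs_of_nonneg (mul_nonneg (mul_nonneg hε'.le hc) (one_div_pos.mpr h1σ).le)]
    rw [hε'def]
    rw [div_mul_eq_mul_div, mul_one_div, div_div]
    rw [div_lt_iff₀ (by nlinarith)]
    nlinarith [mul_pos hε h1σ, mul_nonneg (mul_nonneg hε.le h1σ.le) hc]
  · rw [huIoc]
    filter_upwards [MeasureTheory.ae_restrict_mem measurableSet_Ioc] with s hs
    exact hkey s hs

end main

lemma uext_continuousOn (u : C(Set.Icc (0:ℝ) 1, ℝ)) : ContinuousOn (uext u) (Icc 0 1) := by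
  rw [continuousOn_iff_continuous_restrict]
  have : (Icc (0:ℝ) 1).domRestrict (uext u) = ⇑u := by
    funext x
    simp only [Set.domRestrict_apply, uext, dif_pos x.2]
  rw [this]
  exact u.continuous

lemma uext_nonneg (u : C(Set.Icc (0:ℝ) 1, ℝ)) (hu : ∀ t, 0 ≤ u t) (s : ℝ) : 0 ≤ uext u s := by
  unfold uext
  split
  · exact hu _
  · exact le_refl 0

lemma uext_eq (u : C(Set.Icc (0:ℝ) 1, ℝ)) (s : Set.Icc (0:ℝ) 1) : uext u s = u s := by
  simp [uext, s.2]

section withf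
variable {σ : ℝ} (hσ0 : 0 < σ) {f : ℝ → ℝ → ℝ}
  (hfcont : ContinuousOn (fun p : ℝ × ℝ => f p.1 p.2) (Set.Ioc 0 1 ×ˢ Set.Ici 0))
  (hfext : ContinuousOn (fun p : ℝ × ℝ => p.1 ^ σ * f p.1 p.2) (Set.Icc 0 1 ×ˢ Set.Ici 0))

include hfcont in
lemma fu_aesm (u : C(Set.Icc (0:ℝ) 1, ℝ)) (hu : ∀ t, 0 ≤ u t) :
    AEStronglyMeasurable (fun s => f s (uext u s)) (volume.restrict (Ioc (0:ℝ) 1)) := by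
  apply ContinuousOn.aestronglyMeasurable _ measurableSet_Ioc
  have h1 : ContinuousOn (fun s => (s, uext u s)) (Ioc (0:ℝ) 1) :=
    continuousOn_id.prodMk ((uext_continuousOn u).mono Ioc_subset_Icc_self)
  apply hfcont.comp h1
  intro s hs
  exact ⟨hs, uext_nonneg u hu s⟩

include hfext in
lemma fu_bound (u : C(Set.Icc (0:ℝ) 1, ℝ)) (hu : ∀ t, 0 ≤ u t) :
    ∃ M : ℝ, 0 ≤ M ∧ ∀ s ∈ Ioc (0:ℝ) 1, |f s (uext u s)| ≤ M * s ^ (-σ) := by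
  have h1 : ContinuousOn (fun s => (s, uext u s)) (Icc (0:ℝ) 1) :=
    continuousOn_id.prodMk (uext_continuousOn u)
  have h2 : ContinuousOn (fun s => s ^ σ * f s (uext u s)) (Icc (0:ℝ) 1) := by
    apply hfext.comp h1
    intro s hs
    exact ⟨hs, uext_nonneg u hu s⟩
  obtain ⟨M, hM⟩ := isCompact_Icc.exists_bound_of_continuousOn h2
  refine ⟨max M 0, le_max_right _ _, fun s hs => ?_⟩
  have hsp : (0:ℝ) < s ^ σ := Real.rpow_pos_of_pos hs.1 σ
  have hM' : |s ^ σ * f s (uext u s)| ≤ max M 0 :=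
    le_trans (hM s ⟨hs.1.le, hs.2⟩) (le_max_left _ _)
  rw [abs_mul, abs_of_pos hsp] at hM'
  have hinv : s ^ (-σ) = (s ^ σ)⁻¹ := Real.rpow_neg hs.1.le σ
  rw [hinv]
  rw [← mul_le_mul_iff_right₀ hsp]
  calc s ^ σ * |f s (uext u s)| ≤ max M 0 := hM'
    _ = s ^ σ * (max M 0 * (s ^ σ)⁻¹) := by field_simp
  done
end withf


theorem stmt18 (σ α : ℝ) (hσ0 : 0 < σ) (hσ1 : σ < 1) (hα : 3 < α) (hα4 : α ≤ 4)
    (f : ℝ → ℝ → ℝ)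
    (hfnn : ∀ t ∈ Set.Ioc (0:ℝ) 1, ∀ y : ℝ, 0 ≤ y → 0 ≤ f t y)
    (hfcont : ContinuousOn (fun p : ℝ × ℝ => f p.1 p.2) (Set.Ioc 0 1 ×ˢ Set.Ici 0))
    (hfext : ContinuousOn (fun p : ℝ × ℝ => p.1 ^ σ * f p.1 p.2) (Set.Icc 0 1 ×ˢ Set.Ici 0))
    (N : ℝ)
    (hN : IsGreatest ((fun t : ℝ => ∫ s in (0:ℝ)..1, greenG α t s * s ^ (-σ)) '' Set.Icc 0 1) N)
    (lam τ : ℝ) (hlam0 : 0 < lam) (hlamN : lam ≤ 1 / N) (hτ : 0 < τ)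
    (hcontr : ∀ t ∈ Set.Icc (0:ℝ) 1, ∀ x : ℝ, 0 ≤ x → ∀ y : ℝ, 0 ≤ y →
      t ^ σ * |f t x - f t y| ≤ lam * |x - y| / (1 + τ * Real.sqrt |x - y|) ^ 2) :
    (∀ u : C(Set.Icc (0:ℝ) 1, ℝ), (∀ t, 0 ≤ u t) →
      ContinuousOn (fun t : ℝ => ∫ s in (0:ℝ)..1, greenG α t s * f s (uext u s)) (Set.Icc 0 1) ∧
      ∀ t ∈ Set.Icc (0:ℝ) 1, 0 ≤ ∫ s in (0:ℝ)..1, greenG α t s * f s (uext u s)) ∧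
    (∃! u : C(Set.Icc (0:ℝ) 1, ℝ), (∀ t, 0 ≤ u t) ∧
      ∀ t : Set.Icc (0:ℝ) 1, u t = ∫ s in (0:ℝ)..1, greenG α (t : ℝ) s * f s (uext u s)) := by
  -- basic facts about N
  have hIle : ∀ t ∈ Icc (0:ℝ) 1, (∫ s in (0:ℝ)..1, greenG α t s * s ^ (-σ)) ≤ N :=
    fun t ht => hN.2 ⟨t, ht, rfl⟩
  have hN0 : 0 ≤ N := by
    obtain ⟨t₀, ht₀, heq⟩ := hN.1
    rw [← heq]
    exact greenG_integral_nonneg (σ := σ) hσ0 hα t₀ ht₀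
      (fun s hs => (Real.rpow_pos_of_pos hs.1 _).le)
  have hNpos : 0 < N := by
    rcases eq_or_lt_of_le hN0 with h | h
    · rw [← h, div_zero] at hlamN; linarith
    · exact h
  have hlamN' : lam * N ≤ 1 := by
    rw [le_div_iff₀ hNpos] at hlamN; linarith
  -- part 1 data
  have part1 : ∀ u : C(Set.Icc (0:ℝ) 1, ℝ), (∀ t, 0 ≤ u t) →
      ContinuousOn (fun t : ℝ => ∫ s in (0:ℝ)..1, greenG α t s * f s (uext u s)) (Set.Icc 0 1) ∧
      ∀ t ∈ Set.Icc (0:ℝ) 1, 0 ≤ ∫ s in (0:ℝ)..1, greenG α t s * f s (uext u s) := by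
    intro u hu
    obtain ⟨M, hM0, hMb⟩ := fu_bound (σ := σ) hfext u hu
    have haesm := fu_aesm hfcont u hu
    constructor
    · exact greenG_integral_continuous hσ0 hσ1 hα hM0 haesm hMb
    · intro t ht
      exact greenG_integral_nonneg (σ := σ) hσ0 hα t ht
        (fun s hs => hfnn s hs _ (uext_nonneg u hu s))
  refine ⟨part1, ?_⟩
  -- the complete space P
  have hclosed : IsClosed {u : C(Set.Icc (0:ℝ) 1, ℝ) | ∀ t, 0 ≤ u t} := by
    have : {u : C(Set.Icc (0:ℝ) 1, ℝ) | ∀ t, 0 ≤ u t}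
        = ⋂ t, {u : C(Set.Icc (0:ℝ) 1, ℝ) | 0 ≤ u t} := by
      ext v; simp [Set.mem_iInter]
    rw [this]
    exact isClosed_iInter (fun t => isClosed_le continuous_const
      (continuous_eval_const t))
  haveI : CompleteSpace {u : C(Set.Icc (0:ℝ) 1, ℝ) // ∀ t, 0 ≤ u t} :=
    hclosed.completeSpace_coe
  -- the operator
  set P := {u : C(Set.Icc (0:ℝ) 1, ℝ) // ∀ t, 0 ≤ u t} with hPdef
  have Tdef : ∀ u : P, ∃ v : P, ∀ t : Set.Icc (0:ℝ) 1,
      v.1 t = ∫ s in (0:ℝ)..1, greenG α (t : ℝ) s * f s (uext u.1 s) := by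
    intro u
    obtain ⟨hcont, hnn⟩ := part1 u.1 u.2
    refine ⟨⟨⟨fun t => ∫ s in (0:ℝ)..1, greenG α (t : ℝ) s * f s (uext u.1 s), ?_⟩, ?_⟩, ?_⟩
    · exact hcont.restrict
    · intro t
      exact hnn t t.2
    · intro t; rfl
  choose T hT using Tdef
  -- contraction estimate
  have hTT : ∀ u v : P, dist (T u) (T v) ≤ psi τ (dist u v) := by
    intro u v
    set D := dist u v with hDdef
    have hD0 : 0 ≤ D := dist_nonneg
    have hc0 : 0 ≤ lam * psi τ D := mul_nonneg hlam0.le (psi_nonneg hτ hD0)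
    rw [Subtype.dist_eq, ContinuousMap.dist_le (psi_nonneg hτ hD0)]
    intro x
    obtain ⟨Mu, hMu0, hMub⟩ := fu_bound (σ := σ) hfext u.1 u.2
    obtain ⟨Mv, hMv0, hMvb⟩ := fu_bound (σ := σ) hfext v.1 v.2
    have hintu := greenG_prod_integrable hσ1 hα x.1 x.2 (fu_aesm hfcont u.1 u.2) hMub
    have hintv := greenG_prod_integrable hσ1 hα x.1 x.2 (fu_aesm hfcont v.1 v.2) hMvb
    rw [Real.dist_eq, hT u x, hT v x, ← intervalIntegral.integral_sub hintu hintv]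
    simp only [← mul_sub]
    have hg : ∀ s ∈ Ioc (0:ℝ) 1,
        |f s (uext u.1 s) - f s (uext v.1 s)| ≤ (lam * psi τ D) * s ^ (-σ) := by
      intro s hs
      have hsIcc : s ∈ Icc (0:ℝ) 1 := ⟨hs.1.le, hs.2⟩
      have hxnn := uext_nonneg u.1 u.2 s
      have hynn := uext_nonneg v.1 v.2 s
      have h1 := hcontr s hsIcc _ hxnn _ hynn
      have h2 : lam * |uext u.1 s - uext v.1 s| / (1 + τ * Real.sqrt |uext u.1 s - uext v.1 s|) ^ 2
          = lam * psi τ |uext u.1 s - uext v.1 s| := by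
        unfold psi; rw [mul_div_assoc]
      have h3 : |uext u.1 s - uext v.1 s| ≤ D := by
        rw [uext_eq u.1 ⟨s, hsIcc⟩, uext_eq v.1 ⟨s, hsIcc⟩]
        calc |u.1 ⟨s, hsIcc⟩ - v.1 ⟨s, hsIcc⟩| = dist (u.1 ⟨s, hsIcc⟩) (v.1 ⟨s, hsIcc⟩) :=
              (Real.dist_eq _ _).symm
          _ ≤ dist u.1 v.1 := ContinuousMap.dist_apply_le_dist _
          _ = D := by rw [hDdef, Subtype.dist_eq]
      have h4 : lam * psi τ |uext u.1 s - uext v.1 s| ≤ lam * psi τ D :=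
        mul_le_mul_of_nonneg_left (psi_mono hτ (abs_nonneg _) h3) hlam0.le
      have h5 : s ^ σ * |f s (uext u.1 s) - f s (uext v.1 s)| ≤ lam * psi τ D := by
        rw [h2] at h1; linarith
      have hsp : (0:ℝ) < s ^ σ := Real.rpow_pos_of_pos hs.1 σ
      rw [Real.rpow_neg hs.1.le, ← mul_le_mul_iff_right₀ hsp]
      calc s ^ σ * |f s (uext u.1 s) - f s (uext v.1 s)| ≤ lam * psi τ D := h5
        _ = s ^ σ * (lam * psi τ D * (s ^ σ)⁻¹) := by field_simp
    have hbound := greenG_integral_bound hσ0 hσ1 hα x.1 x.2 hc0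
      ((fu_aesm hfcont u.1 u.2).sub (fu_aesm hfcont v.1 v.2)) hg
    calc |∫ s in (0:ℝ)..1, greenG α (x:ℝ) s * (f s (uext u.1 s) - f s (uext v.1 s))|
        ≤ (lam * psi τ D) * ∫ s in (0:ℝ)..1, greenG α (x:ℝ) s * s ^ (-σ) := hbound
      _ ≤ (lam * psi τ D) * N := mul_le_mul_of_nonneg_left (hIle x.1 x.2) hc0
      _ ≤ psi τ D := by nlinarith [psi_nonneg hτ hD0]
  -- iteration
  set w : ℕ → P := fun n => T^[n] ⟨⟨fun _ => 0, continuous_const⟩, fun t => le_refl 0⟩ with hwdef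
  have hwsucc : ∀ n, w (n + 1) = T (w n) := by
    intro n
    simp only [hwdef, Function.iterate_succ_apply']
  set d : ℕ → ℝ := fun n => dist (w n) (w (n + 1)) with hddef
  have hd0 : ∀ n, 0 ≤ d n := fun n => dist_nonneg
  have hdstep : ∀ n, d (n + 1) ≤ psi τ (d n) := by
    intro n
    calc d (n + 1) = dist (T (w n)) (T (w (n + 1))) := by rw [hddef]; simp [hwsucc]
      _ ≤ psi τ (dist (w n) (w (n + 1))) := hTT _ _
      _ = psi τ (d n) := rfl
  set e : ℕ → ℝ := fun n => Real.sqrt (d n) with hedef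
  have he0 : ∀ n, 0 ≤ e n := fun n => Real.sqrt_nonneg _
  have hestep : ∀ n, e (n + 1) ≤ e n / (1 + τ * e n) := by
    intro n
    calc e (n + 1) = Real.sqrt (d (n + 1)) := rfl
      _ ≤ Real.sqrt (psi τ (d n)) := Real.sqrt_le_sqrt (hdstep n)
      _ = Real.sqrt (d n) / (1 + τ * Real.sqrt (d n)) := psi_sqrt hτ (hd0 n)
      _ = e n / (1 + τ * e n) := rfl
  have hdecay := iter_decay hτ e he0 hestep
  have hdbound : ∀ n, d n ≤ (e 0 / (1 + n * τ * e 0)) ^ 2 := by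
    intro n
    have : d n = (e n) ^ 2 := (Real.sq_sqrt (hd0 n)).symm
    rw [this]
    exact pow_le_pow_left₀ (he0 n) (hdecay n) 2
  -- summability
  have hsum : Summable d := by
    by_cases he00 : e 0 = 0
    · have : ∀ n, d n = 0 := by
        intro n
        have h := hdbound n
        rw [he00] at h
        simp at h
        exact le_antisymm h (hd0 n)
      exact (summable_congr (fun n => (this n))).mpr summable_zero
    · have he0pos : 0 < e 0 := lt_of_le_of_ne (he0 0) (Ne.symm he00)
      set b : ℝ := min 1 (τ * e 0) with hbdef
      have hb0 : 0 < b := lt_min one_pos (mul_pos hτ he0pos)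
      have hcomp : ∀ n : ℕ, d n ≤ (e 0)^2 / b^2 * (1 / ((n:ℝ) + 1)^2) := by
        intro n
        have h1 : b * ((n:ℝ) + 1) ≤ 1 + n * τ * e 0 := by
          have hb1 : b ≤ 1 := min_le_left _ _
          have hb2 : b ≤ τ * e 0 := min_le_right _ _
          have hn0 : (0:ℝ) ≤ n := Nat.cast_nonneg n
          nlinarith
        have h2 : (0:ℝ) < b * ((n:ℝ) + 1) := by positivity
        have h3 : e 0 / (1 + n * τ * e 0) ≤ e 0 / (b * ((n:ℝ) + 1)) :=
          div_le_div_of_nonneg_left he0pos.le h2 h1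
        calc d n ≤ (e 0 / (1 + n * τ * e 0)) ^ 2 := hdbound n
          _ ≤ (e 0 / (b * ((n:ℝ) + 1))) ^ 2 := by
              apply pow_le_pow_left₀ (by positivity) h3
          _ = (e 0)^2 / b^2 * (1 / ((n:ℝ) + 1)^2) := by
              field_simp
      apply Summable.of_nonneg_of_le hd0 hcomp
      apply Summable.mul_left
      have := (summable_nat_add_iff (f := fun n : ℕ => 1 / ((n:ℝ))^2) 1).mpr
      have hbase : Summable (fun n : ℕ => 1 / ((n:ℝ))^2) := by
        simpa using Real.summable_one_div_nat_pow.mpr (le_refl 2)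
      have := (summable_nat_add_iff (f := fun n : ℕ => 1 / ((n:ℝ))^2) 1).mpr hbase
      apply this.congr
      intro n
      push_cast
      ring
  -- Cauchy and limit
  have hcauchy : CauchySeq w := cauchySeq_of_summable_dist hsum
  obtain ⟨wlim, hwlim⟩ := cauchySeq_tendsto_of_complete hcauchy
  have hTcont : Continuous T := by
    apply LipschitzWith.continuous (K := 1)
    apply LipschitzWith.of_dist_le_mul
    intro a b
    rw [NNReal.coe_one, one_mul]
    exact (hTT a b).trans (psi_le_self hτ dist_nonneg)
  have hfix : T wlim = wlim := by
    have h1 : Filter.Tendsto (fun n => T (w n)) Filter.atTop (nhds (T wlim)) :=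
      (hTcont.tendsto wlim).comp hwlim
    have h2 : Filter.Tendsto (fun n => w (n + 1)) Filter.atTop (nhds wlim) :=
      hwlim.comp (Filter.tendsto_add_atTop_nat 1)
    have h3 : (fun n => T (w n)) = (fun n => w (n + 1)) := by
      funext n; exact (hwsucc n).symm
    rw [h3] at h1
    exact tendsto_nhds_unique h1 h2
  -- conclusion
  refine ⟨wlim.1, ⟨wlim.2, ?_⟩, ?_⟩
  · intro t
    rw [← hT wlim t, hfix]
  · rintro v ⟨hv1, hv2⟩
    set v' : P := ⟨v, hv1⟩ with hv'def
    have hfixv : T v' = v' := by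
      apply Subtype.ext
      apply ContinuousMap.ext
      intro x
      rw [hT v' x]
      exact (hv2 x).symm
    have hD : dist v' wlim ≤ psi τ (dist v' wlim) := by
      calc dist v' wlim = dist (T v') (T wlim) := by rw [hfixv, hfix]
        _ ≤ psi τ (dist v' wlim) := hTT _ _
    have hD0 : dist v' wlim = 0 := by
      by_contra hne
      have hpos : 0 < dist v' wlim := lt_of_le_of_ne dist_nonneg (Ne.symm hne)
      have := psi_lt_self hτ hpos
      linarith
    have : v' = wlim := by
      rwa [dist_eq_zero] at hD0
    rw [← this]
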